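/- (Splitting a Minimal Homotopy, part 1.) Let γ₁, γ₂, γ₃ : [0,1] → ℂ be continuous paths with common endpoints such that the range of γ₂ is Lebesgue-null, let H₁ be a homotopy from γ₁ to γ₂ and H₂ a homotopy from γ₂ to γ₃, and suppose the concatenation H = H₁ + H₂ is minimum, i.e. Area(H) = σ(γ₁, γ₃) < ∞. Then the sub-homotopies are also minimum: Area(H₁) = σ(γ₁, γ₂) and Area(H₂) = σ(γ₂, γ₃). -/

import Mathlib

open MeasureTheory unitInterval ENNReal

set_option linter.unusedSectionVars false
set_option maxHeartbeats 1000000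

noncomputable section

/-- `homE H p` is the number of connected components of the fiber `H⁻¹({p})`,
as an extended natural number. -/
def homE {a b : ℂ} {γ₁ γ₂ : Path a b} (H : Path.Homotopy γ₁ γ₂) (p : ℂ) : ℕ∞ :=
  ENat.card (ConnectedComponents ↥(⇑H ⁻¹' {p}))

/-- The homotopy area `Area(H) = ∫⁻ x, E_H(x)`. -/
def homArea {a b : ℂ} {γ₁ γ₂ : Path a b} (H : Path.Homotopy γ₁ γ₂) : ℝ≥0∞ :=
  ∫⁻ p, (homE H p : ℝ≥0∞)

/-- The minimum homotopy area `σ(γ₁, γ₂)`, the infimum of `Area(H)` over all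
homotopies rel endpoints from `γ₁` to `γ₂`. -/
def minHomArea {a b : ℂ} (γ₁ γ₂ : Path a b) : ℝ≥0∞ :=
  ⨅ H : Path.Homotopy γ₁ γ₂, homArea H

open Set ENNReal



section CC
variable {X Y : Type*} [TopologicalSpace X] [TopologicalSpace Y]

lemma preconn_subset_inl_or_inr {s : Set (X ⊕ Y)} (hs : IsPreconnected s) :
    s ⊆ range Sum.inl ∨ s ⊆ range Sum.inr := by
  have hcover : s ⊆ range Sum.inl ∪ range Sum.inr := by
    intro w _
    cases w with
    | inl x => exact Or.inl ⟨x, rfl⟩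
    | inr y => exact Or.inr ⟨y, rfl⟩
  by_contra hcon
  rw [not_or, Set.not_subset, Set.not_subset] at hcon
  obtain ⟨⟨u, hu, hu'⟩, ⟨v, hv, hv'⟩⟩ := hcon
  have hu2 : u ∈ range (Sum.inr : Y → X ⊕ Y) := (hcover hu).resolve_left hu'
  have hv2 : v ∈ range (Sum.inl : X → X ⊕ Y) := (hcover hv).resolve_right hv'
  obtain ⟨w, hws, hw1, hw2⟩ := hs (range Sum.inl) (range Sum.inr) isOpen_range_inl
    isOpen_range_inr hcover ⟨v, hv, hv2⟩ ⟨u, hu, hu2⟩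
  obtain ⟨x, rfl⟩ := hw1
  obtain ⟨y, h⟩ := hw2
  exact Sum.inr_ne_inl h

instance sumTD [TotallyDisconnectedSpace X] [TotallyDisconnectedSpace Y] :
    TotallyDisconnectedSpace (X ⊕ Y) := by
  constructor
  intro s _ hs
  rcases preconn_subset_inl_or_inr hs with h | h
  · have : s = Sum.inl '' (Sum.inl ⁻¹' s) := by
      rw [Set.image_preimage_eq_inter_range, Set.inter_eq_left.mpr h]
    rw [this]
    apply Set.Subsingleton.image
    exact isTotallyDisconnected_of_totallyDisconnectedSpace univ _ (subset_univ _)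
      (Topology.IsEmbedding.inl.toIsInducing.isPreconnected_image.mp (by rwa [← this]))
  · have : s = Sum.inr '' (Sum.inr ⁻¹' s) := by
      rw [Set.image_preimage_eq_inter_range, Set.inter_eq_left.mpr h]
    rw [this]
    apply Set.Subsingleton.image
    exact isTotallyDisconnected_of_totallyDisconnectedSpace univ _ (subset_univ _)
      (Topology.IsEmbedding.inr.toIsInducing.isPreconnected_image.mp (by rwa [← this]))
end CC


section CC2
variable {X Y : Type*} [TopologicalSpace X] [TopologicalSpace Y]

/-- A homeomorphism induces an equivalence of connected components. -/
noncomputable def ccEquiv (e : X ≃ₜ Y) : ConnectedComponents X ≃ ConnectedComponents Y where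
  toFun := Continuous.connectedComponentsLift
    (ConnectedComponents.continuous_coe.comp e.continuous)
  invFun := Continuous.connectedComponentsLift
    (ConnectedComponents.continuous_coe.comp e.symm.continuous)
  left_inv := ConnectedComponents.surjective_coe.forall.2 fun x => by
    simp [Continuous.connectedComponentsLift_apply_coe]
  right_inv := ConnectedComponents.surjective_coe.forall.2 fun y => by
    simp [Continuous.connectedComponentsLift_apply_coe]

/-- Connected components of a disjoint union. -/
noncomputable def ccSumEquiv :
    ConnectedComponents (X ⊕ Y) ≃ ConnectedComponents X ⊕ ConnectedComponents Y where
  toFun := Continuous.connectedComponentsLift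
    (Continuous.sumElim (continuous_inl.comp ConnectedComponents.continuous_coe)
      (continuous_inr.comp ConnectedComponents.continuous_coe))
  invFun := Sum.elim
    (Continuous.connectedComponentsLift
      (ConnectedComponents.continuous_coe.comp continuous_inl))
    (Continuous.connectedComponentsLift
      (ConnectedComponents.continuous_coe.comp continuous_inr))
  left_inv := ConnectedComponents.surjective_coe.forall.2 fun z => by
    cases z with
    | inl x => simp [Continuous.connectedComponentsLift_apply_coe]
    | inr y => simp [Continuous.connectedComponentsLift_apply_coe]
  right_inv := by
    rintro (cx | cy)
    · obtain ⟨x, rfl⟩ := ConnectedComponents.surjective_coe cx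
      simp [Continuous.connectedComponentsLift_apply_coe]
    · obtain ⟨y, rfl⟩ := ConnectedComponents.surjective_coe cy
      simp [Continuous.connectedComponentsLift_apply_coe]


lemma natCast_le_enatCard_iff {β : Type*} {n : ℕ} :
    (n : ℕ∞) ≤ ENat.card β ↔ Nonempty (Fin n ↪ β) := by
  rw [ENat.card, Cardinal.natCast_le_toENat_iff]
  have h1 : (n : Cardinal) = Cardinal.mk (ULift.{_,0} (Fin n)) := by simp
  rw [h1, Cardinal.le_def]
  exact ⟨fun ⟨f⟩ => ⟨(Equiv.ulift.symm.toEmbedding).trans f⟩,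
    fun ⟨f⟩ => ⟨(Equiv.ulift.toEmbedding).trans f⟩⟩


section Rel
variable {X : Type*} [TopologicalSpace X] {Y : Type*} [TopologicalSpace Y]

/-- Two points are in the same fiber of `f` and in the same connected component of it. -/
def SameFiberComp (f : X → Y) (x y : X) : Prop :=
  ∃ C : Set X, C ⊆ f ⁻¹' {f x} ∧ IsPreconnected C ∧ x ∈ C ∧ y ∈ C

lemma sameFiberComp_iff {f : X → Y} {p : Y} {x y : X} (hx : f x = p) (hy : f y = p) :
    SameFiberComp f x y ↔
      (ConnectedComponents.mk (⟨x, hx⟩ : (f ⁻¹' {p} : Set X)) = ConnectedComponents.mk ⟨y, hy⟩) := by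
  constructor
  · rintro ⟨C, hCsub, hCpre, hxC, hyC⟩
    rw [hx] at hCsub
    have hpre : IsPreconnected ((Subtype.val : (f ⁻¹' {p} : Set X) → X) ⁻¹' C) := by
      apply Topology.IsInducing.subtypeVal.isPreconnected_image.mp
      rwa [Subtype.image_preimage_coe, inter_eq_right.mpr hCsub]
    rw [ConnectedComponents.coe_eq_coe]
    have h1 : (⟨x, hx⟩ : (f ⁻¹' {p} : Set X)) ∈ (Subtype.val ⁻¹' C : Set _) := hxC
    have h2 : (⟨y, hy⟩ : (f ⁻¹' {p} : Set X)) ∈ (Subtype.val ⁻¹' C : Set _) := hyC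
    have hsub := hpre.subset_connectedComponent h1
    exact connectedComponent_eq (hsub h2)
  · intro h
    rw [ConnectedComponents.coe_eq_coe] at h
    refine ⟨Subtype.val '' connectedComponent (⟨x, hx⟩ : (f ⁻¹' {p} : Set X)), ?_, ?_, ?_, ?_⟩
    · rw [hx]; exact fun z ⟨w, _, hw⟩ => hw ▸ w.2
    · exact Topology.IsInducing.subtypeVal.isPreconnected_image.mpr
        isPreconnected_connectedComponent
    · exact ⟨_, mem_connectedComponent, rfl⟩
    · exact ⟨⟨y, hy⟩, h ▸ mem_connectedComponent, rfl⟩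

omit [TopologicalSpace Y] in
lemma sameFiberComp_apply_eq {f : X → Y} {x y : X} (h : SameFiberComp f x y) : f x = f y := by
  obtain ⟨C, hCsub, -, -, hyC⟩ := h
  exact (hCsub hyC).symm

end Rel


section Rel
variable {X : Type*} [TopologicalSpace X] {Y : Type*} [TopologicalSpace Y]

lemma isOpen_not_sameFiberComp [CompactSpace X] [T2Space X] [T2Space Y]
    {f : X → Y} (hf : Continuous f) :
    IsOpen {z : X × X | ¬ SameFiberComp f z.1 z.2} := by
  rw [isOpen_iff_mem_nhds]
  rintro ⟨x, y⟩ hz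
  simp only [mem_setOf_eq] at hz
  by_cases hfxy : f x = f y
  case neg =>
    -- the set where the two fiber values differ is an open neighbourhood
    have hopen : IsOpen {z : X × X | f z.1 ≠ f z.2} := by
      have : {z : X × X | f z.1 ≠ f z.2} =
          (fun z : X × X => (f z.1, f z.2)) ⁻¹' (diagonal Y)ᶜ := by
        ext z; simp [diagonal]
      rw [this]
      exact (isClosed_diagonal.isOpen_compl).preimage ((hf.comp continuous_fst).prodMk
        (hf.comp continuous_snd))
    refine Filter.mem_of_superset (hopen.mem_nhds hfxy) ?_
    intro z hne hrel
    obtain ⟨C, hCsub, -, hz1, hz2⟩ := hrel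
    exact hne ((hCsub hz2).symm)
  case pos =>
    set p := f x with hp
    have hy' : f y = p := hfxy.symm
    have hx' : f x = p := rfl
    -- x and y are in different components of the compact fiber
    haveI : CompactSpace (f ⁻¹' {p} : Set X) :=
      isCompact_iff_compactSpace.mp ((isClosed_singleton.preimage hf).isCompact)
    have hne : (⟨y, hy'⟩ : (f ⁻¹' {p} : Set X)) ∉
        connectedComponent (⟨x, hx'⟩ : (f ⁻¹' {p} : Set X)) := by
      intro hmem
      exact hz ⟨Subtype.val '' connectedComponent (⟨x, hx'⟩ : (f ⁻¹' {p} : Set X)),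
        by rw [hp] at *; exact fun w ⟨u, _, hu⟩ => hu ▸ u.2,
        Topology.IsInducing.subtypeVal.isPreconnected_image.mpr
          isPreconnected_connectedComponent,
        ⟨_, mem_connectedComponent, rfl⟩, ⟨_, hmem, rfl⟩⟩
    -- find a clopen separation
    rw [connectedComponent_eq_iInter_isClopen] at hne
    simp only [mem_iInter, not_forall] at hne
    obtain ⟨⟨Z, hZclopen, hxZ⟩, hyZ⟩ := hne
    simp only at hyZ
    -- compact pieces of the fiber
    set K₁ : Set X := Subtype.val '' Z with hK₁
    set K₂ : Set X := Subtype.val '' Zᶜ with hK₂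
    have hK₁c : IsCompact K₁ := (hZclopen.1.isCompact).image continuous_subtype_val
    have hK₂c : IsCompact K₂ := (hZclopen.2.isClosed_compl.isCompact).image continuous_subtype_val
    have hdisj : Disjoint K₁ K₂ := by
      rw [disjoint_iff_inter_eq_empty]
      ext w
      simp only [hK₁, hK₂, mem_inter_iff, mem_image, mem_empty_iff_false, iff_false, not_and]
      rintro ⟨u, hu, rfl⟩ ⟨v, hv, hvu⟩
      rw [Subtype.val_injective hvu] at hv
      exact hv hu
    obtain ⟨U, V, hUo, hVo, hK₁U, hK₂V, hUV⟩ := SeparatedNhds.of_isCompact_isCompact hK₁c hK₂c hdisj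
    -- the set of fibers inside U ∪ V
    set W : Set Y := (f '' (U ∪ V)ᶜ)ᶜ with hW
    have hWo : IsOpen W :=
      ((((hUo.union hVo).isClosed_compl.isCompact).image hf).isClosed).isOpen_compl
    have hfiber_sub : ∀ q ∈ W, f ⁻¹' {q} ⊆ U ∪ V := by
      intro q hq w hw
      by_contra hwUV
      exact hq ⟨w, hwUV, hw⟩
    have hpW : p ∈ W := by
      rintro ⟨w, hwUV, hwp⟩
      have : w ∈ f ⁻¹' {p} := hwp
      have : (⟨w, this⟩ : (f ⁻¹' {p} : Set X)) ∈ Z ∨ (⟨w, this⟩ : (f ⁻¹' {p} : Set X)) ∈ Zᶜ :=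
        (em _).imp id id
      rcases this with h | h
      · exact hwUV (Or.inl (hK₁U ⟨_, h, rfl⟩))
      · exact hwUV (Or.inr (hK₂V ⟨_, h, rfl⟩))
    -- the neighbourhood
    have hxU : x ∈ U := hK₁U ⟨_, hxZ, rfl⟩
    have hyV : y ∈ V := hK₂V ⟨_, hyZ, rfl⟩
    have hN : (U ∩ f ⁻¹' W) ×ˢ (V ∩ f ⁻¹' W) ∈ nhds (x, y) := by
      apply IsOpen.mem_nhds
      · exact (hUo.inter (hWo.preimage hf)).prod (hVo.inter (hWo.preimage hf))
      · exact ⟨⟨hxU, hpW⟩, ⟨hyV, by rw [mem_preimage, hy']; exact hpW⟩⟩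
    refine Filter.mem_of_superset hN ?_
    rintro ⟨x', y'⟩ ⟨⟨hx'U, hx'W⟩, ⟨hy'V, _⟩⟩ hrel
    obtain ⟨C, hCsub, hCpre, hx'C, hy'C⟩ := hrel
    have hCUV : C ⊆ U ∪ V := fun w hw => hfiber_sub _ hx'W (hCsub hw)
    obtain ⟨w, hwC, hwU, hwV⟩ := hCpre U V hUo hVo hCUV ⟨x', hx'C, hx'U⟩ ⟨y', hy'C, hy'V⟩
    exact (hUV.ne_of_mem hwU hwV) rfl
end Rel


lemma exists_compact_seq {Z : Type*} [PseudoEMetricSpace Z] {S₁ S₂ : Set Z}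
    (h1 : IsCompact S₁) (h2 : IsOpen S₂) :
    ∃ K : ℕ → Set Z, (∀ m, IsCompact (K m)) ∧ S₁ ∩ S₂ = ⋃ m, K m := by
  refine ⟨fun m => S₁ ∩ {z | (m : ℝ≥0∞)⁻¹ ≤ EMetric.infEdist z S₂ᶜ}, fun m => ?_, ?_⟩
  · exact h1.inter_right (isClosed_le continuous_const EMetric.continuous_infEdist)
  · ext z
    simp only [mem_inter_iff, mem_iUnion, mem_setOf_eq]
    constructor
    · rintro ⟨hz1, hz2⟩
      have hnz : EMetric.infEdist z S₂ᶜ ≠ 0 := by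
        intro h0
        exact (EMetric.mem_iff_infEdist_zero_of_closed h2.isClosed_compl).mpr h0 hz2
      obtain ⟨m, hm⟩ := ENNReal.exists_inv_nat_lt hnz
      exact ⟨m, hz1, hm.le⟩
    · rintro ⟨m, hz1, hz2⟩
      refine ⟨hz1, ?_⟩
      have hpos : (0 : ℝ≥0∞) < EMetric.infEdist z S₂ᶜ :=
        lt_of_lt_of_le (ENNReal.inv_pos.mpr (ENNReal.natCast_ne_top m)) hz2
      by_contra hz3
      rw [show EMetric.infEdist z S₂ᶜ = 0 from
          (EMetric.mem_iff_infEdist_zero_of_closed h2.isClosed_compl).mp (by simpa using hz3)]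
        at hpos
      exact lt_irrefl _ hpos

section Count
variable {X : Type*} [MetricSpace X] [CompactSpace X]

lemma levelSet_eq_image (f : X → ℂ) (n : ℕ) :
    {p : ℂ | (((n+1 : ℕ) : ℕ∞)) ≤ ENat.card (ConnectedComponents ((f ⁻¹' {p}) : Set X))} =
      (fun x : Fin (n+1) → X => f (x 0)) ''
        {x : Fin (n+1) → X | (∀ i, f (x i) = f (x 0)) ∧
          ∀ i j, i ≠ j → ¬ SameFiberComp f (x i) (x j)} := by
  ext p
  simp only [mem_setOf_eq, mem_image]
  constructor
  · intro hp
    obtain ⟨emb⟩ := natCast_le_enatCard_iff.mp hp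
    have hsur := fun i => ConnectedComponents.surjective_coe (emb i)
    choose z hz using hsur
    refine ⟨fun i => (z i).1, ⟨?_, ?_⟩, ?_⟩
    · intro i
      have h1 : f (z i).1 = p := (z i).2
      have h2 : f (z 0).1 = p := (z 0).2
      rw [h1, h2]
    · intro i j hij hrel
      have hi : f (z i).1 = p := (z i).2
      have hj : f (z j).1 = p := (z j).2
      rw [sameFiberComp_iff hi hj] at hrel
      apply hij
      apply emb.injective
      have hzi : (⟨(z i).1, hi⟩ : (f ⁻¹' {p} : Set X)) = z i := Subtype.ext rfl
      have hzj : (⟨(z j).1, hj⟩ : (f ⁻¹' {p} : Set X)) = z j := Subtype.ext rfl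
      rw [← hz i, ← hz j]
      rw [hzi, hzj] at hrel
      exact hrel
    · exact (z 0).2
  · rintro ⟨x, ⟨hall, hpair⟩, rfl⟩
    apply natCast_le_enatCard_iff.mpr
    refine ⟨⟨fun i => ConnectedComponents.mk
      (⟨x i, show x i ∈ f ⁻¹' {f (x 0)} from hall i⟩ : (f ⁻¹' {f (x 0)} : Set X)), ?_⟩⟩
    intro i j hij
    by_contra hne
    exact hpair i j hne ((sameFiberComp_iff (hall i) (hall j)).mpr hij)

lemma measurable_levelSet (f : X → ℂ) (hf : Continuous f) (n : ℕ) :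
    MeasurableSet
      {p : ℂ | (((n+1 : ℕ) : ℕ∞)) ≤ ENat.card (ConnectedComponents ((f ⁻¹' {p}) : Set X))} := by
  rw [levelSet_eq_image f n]
  set S₁ : Set (Fin (n+1) → X) := {x | ∀ i, f (x i) = f (x 0)} with hS₁
  set S₂ : Set (Fin (n+1) → X) :=
    {x | ∀ i j, i ≠ j → ¬ SameFiberComp f (x i) (x j)} with hS₂
  have hS : {x : Fin (n+1) → X | (∀ i, f (x i) = f (x 0)) ∧
      ∀ i j, i ≠ j → ¬ SameFiberComp f (x i) (x j)} = S₁ ∩ S₂ := rfl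
  rw [hS]
  have h1 : IsCompact S₁ := by
    have : IsClosed S₁ := by
      have : S₁ = ⋂ i, {x : Fin (n+1) → X | f (x i) = f (x 0)} := by
        ext x; simp [hS₁]
      rw [this]
      exact isClosed_iInter fun i =>
        isClosed_eq (hf.comp (continuous_apply i)) (hf.comp (continuous_apply 0))
    exact this.isCompact
  have h2 : IsOpen S₂ := by
    have : S₂ = ⋂ i, ⋂ j, {x : Fin (n+1) → X | i ≠ j → ¬ SameFiberComp f (x i) (x j)} := by
      ext x; simp [hS₂]
    rw [this]
    apply isOpen_iInter_of_finite; intro i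
    apply isOpen_iInter_of_finite; intro j
    by_cases hij : i = j
    · have : {x : Fin (n+1) → X | i ≠ j → ¬ SameFiberComp f (x i) (x j)} = univ := by
        ext x; simp [hij]
      rw [this]; exact isOpen_univ
    · have : {x : Fin (n+1) → X | i ≠ j → ¬ SameFiberComp f (x i) (x j)} =
          (fun x : Fin (n+1) → X => ((x i), (x j))) ⁻¹'
            {z : X × X | ¬ SameFiberComp f z.1 z.2} := by
        ext x; simp [hij]
      rw [this]
      exact (isOpen_not_sameFiberComp hf).preimage
        ((continuous_apply i).prodMk (continuous_apply j))
  obtain ⟨K, hKc, hKeq⟩ := exists_compact_seq h1 h2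
  rw [hKeq, image_iUnion]
  exact MeasurableSet.iUnion fun m =>
    (((hKc m).image (hf.comp (continuous_apply 0))).isClosed).measurableSet

lemma enat_toENNReal_tsum (e : ℕ∞) :
    (e : ℝ≥0∞) = ∑' n : ℕ, (if (((n+1 : ℕ) : ℕ∞)) ≤ e then (1 : ℝ≥0∞) else 0) := by
  induction e using ENat.recTopCoe with
  | top =>
    simp only [le_top, if_true]
    rw [ENNReal.tsum_const_eq_top_of_ne_zero one_ne_zero]
    rfl
  | coe k =>
    have hcond : ∀ n : ℕ, ((((n+1 : ℕ) : ℕ∞)) ≤ (k : ℕ∞)) ↔ n < k := by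
      intro n
      rw [Nat.cast_le]
      omega
    have : (fun n : ℕ => if (((n+1 : ℕ) : ℕ∞)) ≤ (k : ℕ∞) then (1 : ℝ≥0∞) else 0) =
        fun n : ℕ => if n < k then (1 : ℝ≥0∞) else 0 := by
      funext n; rw [if_congr (hcond n) rfl rfl]
    rw [this, tsum_eq_sum (s := Finset.range k) (fun b hb => by
      simp only [Finset.mem_range] at hb; rw [if_neg hb])]
    have : ∀ b ∈ Finset.range k, (if b < k then (1 : ℝ≥0∞) else 0) = 1 := by
      intro b hb; simp only [Finset.mem_range] at hb; rw [if_pos hb]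
    rw [Finset.sum_congr rfl this, Finset.sum_const, Finset.card_range, nsmul_eq_mul, mul_one]
    simp

lemma measurable_fiberCount (f : X → ℂ) (hf : Continuous f) :
    Measurable fun p : ℂ =>
      ((ENat.card (ConnectedComponents ((f ⁻¹' {p}) : Set X)) : ℕ∞) : ℝ≥0∞) := by
  have heq : (fun p : ℂ =>
      ((ENat.card (ConnectedComponents ((f ⁻¹' {p}) : Set X)) : ℕ∞) : ℝ≥0∞)) =
      fun p => ∑' n : ℕ, (if (((n+1 : ℕ) : ℕ∞)) ≤
        ENat.card (ConnectedComponents ((f ⁻¹' {p}) : Set X)) then (1 : ℝ≥0∞) else 0) :=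
    funext fun p => enat_toENNReal_tsum _
  rw [heq]
  apply Measurable.ennreal_tsum
  intro n
  have : (fun p : ℂ => (if (((n+1 : ℕ) : ℕ∞)) ≤
      ENat.card (ConnectedComponents ((f ⁻¹' {p}) : Set X)) then (1 : ℝ≥0∞) else 0)) =
      Set.indicator {p : ℂ | (((n+1 : ℕ) : ℕ∞)) ≤
        ENat.card (ConnectedComponents ((f ⁻¹' {p}) : Set X))} (fun _ => 1) := by
    funext p
    rw [Set.indicator_apply]
    rfl
  rw [this]
  exact Measurable.indicator measurable_const (measurable_levelSet f hf n)

end Count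

/-- the two halves of `I`. -/
def half (u : I) : I := ⟨(u : ℝ)/2, by constructor <;> [linarith [u.2.1]; linarith [u.2.2]]⟩

def halfUp (u : I) : I :=
  ⟨((u : ℝ)+1)/2, by constructor <;> [linarith [u.2.1]; linarith [u.2.2]]⟩

lemma homE_trans {a b : ℂ} {γ₁ γ₂ γ₃ : Path a b}
    (H₁ : Path.Homotopy γ₁ γ₂) (H₂ : Path.Homotopy γ₂ γ₃) {p : ℂ}
    (hp : p ∉ Set.range γ₂) :
    homE (H₁.trans H₂) p = homE H₁ p + homE H₂ p := by
  set F : Set (I × I) := ⇑(H₁.trans H₂) ⁻¹' {p} with hF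
  set F₁ : Set (I × I) := ⇑H₁ ⁻¹' {p} with hF₁
  set F₂ : Set (I × I) := ⇑H₂ ⁻¹' {p} with hF₂
  -- evaluation on the left half
  have hhalf : ∀ (u t : I), (H₁.trans H₂) (half u, t) = H₁ (u, t) := by
    intro u t
    rw [Path.Homotopy.trans_apply]
    have hc : ((half u : I) : ℝ) ≤ 1/2 := by
      have := u.2.2; simp only [half]; linarith
    rw [dif_pos hc]
    congr 2
    apply Subtype.ext
    show 2 * ((u : ℝ)/2) = (u : ℝ)
    ring
  -- evaluation on the right half
  have hhalfUp : ∀ (u t : I), (H₁.trans H₂) (halfUp u, t) = H₂ (u, t) := by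
    intro u t
    rw [Path.Homotopy.trans_apply]
    by_cases hu : (u : ℝ) ≤ 0
    · have hu0 : u = 0 := Subtype.ext (le_antisymm hu u.2.1)
      subst hu0
      have hc : ((halfUp 0 : I) : ℝ) ≤ 1/2 := by norm_num [halfUp]
      rw [dif_pos hc, H₂.apply_zero, ← H₁.apply_one t]
      congr 2
      apply Subtype.ext
      show (2:ℝ) * ((halfUp 0 : I) : ℝ) = ((1:I) : ℝ)
      show (2:ℝ) * ((((0:I) : ℝ)+1)/2) = ((1:I) : ℝ)
      norm_num
    · have hc : ¬ ((halfUp u : I) : ℝ) ≤ 1/2 := by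
        simp only [halfUp]; push_neg at hu ⊢; linarith
      rw [dif_neg hc]
      congr 2
      apply Subtype.ext
      show 2 * (((u : ℝ)+1)/2) - 1 = (u : ℝ)
      ring
  -- membership
  have hmem₁ : ∀ z : ↥F₁, ((half z.1.1, z.1.2)) ∈ F := by
    rintro ⟨⟨u, t⟩, hz⟩
    simp only [hF, mem_preimage, mem_singleton_iff]
    rw [hhalf]
    exact hz
  have hmem₂ : ∀ z : ↥F₂, ((halfUp z.1.1, z.1.2)) ∈ F := by
    rintro ⟨⟨u, t⟩, hz⟩
    simp only [hF, mem_preimage, mem_singleton_iff]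
    rw [hhalfUp]
    exact hz
  -- the gluing map
  set e : ↥F₁ ⊕ ↥F₂ → ↥F := Sum.elim (fun z => ⟨_, hmem₁ z⟩) (fun z => ⟨_, hmem₂ z⟩) with he
  have hbij : Function.Bijective e := by
    constructor
    · rintro (⟨⟨u, t⟩, hz⟩ | ⟨⟨u, t⟩, hz⟩) (⟨⟨v, s⟩, hw⟩ | ⟨⟨v, s⟩, hw⟩) h <;>
        simp only [he, Sum.elim_inl, Sum.elim_inr, Subtype.mk.injEq, Prod.mk.injEq] at h
      · obtain ⟨h1, h2⟩ := h
        have : u = v := Subtype.ext (by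
          have := congrArg Subtype.val h1
          simp only [half] at this
          linarith [this])
        subst this; subst h2; rfl
      · exfalso
        obtain ⟨h1, h2⟩ := h
        have hv : (v : ℝ) = (u : ℝ) - 1 := by
          have := congrArg Subtype.val h1
          simp only [half, halfUp] at this
          linarith
        have hv0 : v = 0 := Subtype.ext (le_antisymm (by
          rw [hv]
          have h00 : ((0:I) : ℝ) = 0 := rfl
          rw [h00]
          linarith [u.2.2]) v.2.1)
        subst hv0
        apply hp
        refine ⟨s, ?_⟩
        have := H₂.apply_zero s
        simp only [mem_preimage, mem_singleton_iff, hF₂] at hw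
        rw [← hw]
        exact this.symm
      · exfalso
        obtain ⟨h1, h2⟩ := h
        have hu : (u : ℝ) = (v : ℝ) - 1 := by
          have := congrArg Subtype.val h1
          simp only [half, halfUp] at this
          linarith
        have hu0 : u = 0 := Subtype.ext (le_antisymm (by
          rw [hu]
          have h00 : ((0:I) : ℝ) = 0 := rfl
          rw [h00]
          linarith [v.2.2]) u.2.1)
        subst hu0
        apply hp
        refine ⟨t, ?_⟩
        have := H₂.apply_zero t
        simp only [mem_preimage, mem_singleton_iff, hF₂] at hz
        rw [← hz]
        exact this.symm
      · obtain ⟨h1, h2⟩ := h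
        have : u = v := Subtype.ext (by
          have := congrArg Subtype.val h1
          simp only [halfUp] at this
          linarith [this])
        subst this; subst h2; rfl
    · rintro ⟨⟨s, t⟩, hz⟩
      simp only [hF, mem_preimage, mem_singleton_iff] at hz
      rw [Path.Homotopy.trans_apply] at hz
      by_cases hs : ((s : I) : ℝ) ≤ 1/2
      · rw [dif_pos hs] at hz
        refine ⟨Sum.inl ⟨(⟨2 * (s : ℝ), (unitInterval.mul_pos_mem_iff zero_lt_two).2
          ⟨s.2.1, hs⟩⟩, t), hz⟩, ?_⟩
        simp only [he, Sum.elim_inl]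
        apply Subtype.ext
        apply Prod.ext
        · apply Subtype.ext
          show (2 * (s : ℝ))/2 = (s : ℝ)
          ring
        · rfl
      · rw [dif_neg hs] at hz
        refine ⟨Sum.inr ⟨(⟨2 * (s : ℝ) - 1, unitInterval.two_mul_sub_one_mem_iff.2
          ⟨(not_le.1 hs).le, s.2.2⟩⟩, t), hz⟩, ?_⟩
        simp only [he, Sum.elim_inr]
        apply Subtype.ext
        apply Prod.ext
        · apply Subtype.ext
          show ((2 * (s : ℝ) - 1)+1)/2 = (s : ℝ)
          ring
        · rfl
  -- continuity
  have hhalfc : Continuous half :=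
    Continuous.subtype_mk (continuous_subtype_val.div_const 2) _
  have hhalfUpc : Continuous halfUp :=
    Continuous.subtype_mk ((continuous_subtype_val.add continuous_const).div_const 2) _
  have hcont : Continuous e := by
    apply Continuous.sumElim
    · exact Continuous.subtype_mk (((hhalfc.comp continuous_fst).comp
        continuous_subtype_val).prodMk ((continuous_snd.comp continuous_subtype_val))) _
    · exact Continuous.subtype_mk (((hhalfUpc.comp continuous_fst).comp
        continuous_subtype_val).prodMk ((continuous_snd.comp continuous_subtype_val))) _
  -- compactness
  haveI : CompactSpace ↥F₁ :=
    isCompact_iff_compactSpace.mp ((isClosed_singleton.preimage H₁.continuous).isCompact)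
  haveI : CompactSpace ↥F₂ :=
    isCompact_iff_compactSpace.mp ((isClosed_singleton.preimage H₂.continuous).isCompact)
  have homeo : (↥F₁ ⊕ ↥F₂) ≃ₜ ↥F :=
    Continuous.homeoOfEquivCompactToT2 (f := Equiv.ofBijective e hbij) hcont
  show ENat.card (ConnectedComponents ↥F) =
    ENat.card (ConnectedComponents ↥F₁) + ENat.card (ConnectedComponents ↥F₂)
  rw [ENat.card_congr (ccEquiv homeo.symm), ENat.card_congr (ccSumEquiv), ENat.card_sum]


lemma homArea_trans {a b : ℂ} {γ₁ γ₂ γ₃ : Path a b}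
    (H₁ : Path.Homotopy γ₁ γ₂) (H₂ : Path.Homotopy γ₂ γ₃)
    (hnull : volume (Set.range γ₂) = 0) :
    homArea (H₁.trans H₂) = homArea H₁ + homArea H₂ := by
  have hmeas : Measurable fun p : ℂ => (homE H₁ p : ℝ≥0∞) :=
    measurable_fiberCount ⇑H₁ H₁.continuous
  have hae : (fun p : ℂ => (homE (H₁.trans H₂) p : ℝ≥0∞)) =ᵐ[volume]
      fun p => (homE H₁ p : ℝ≥0∞) + (homE H₂ p : ℝ≥0∞) := by
    apply ae_iff.mpr
    apply measure_mono_null ?_ hnull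
    intro p hp
    by_contra hpr
    apply hp
    show (homE (H₁.trans H₂) p : ℝ≥0∞) = (homE H₁ p : ℝ≥0∞) + (homE H₂ p : ℝ≥0∞)
    rw [homE_trans H₁ H₂ hpr]
    exact_mod_cast rfl
  rw [homArea, lintegral_congr_ae hae, lintegral_add_left hmeas]
  rfl

/-- Splitting a minimal homotopy, part 1: the sub-homotopies of a minimum
concatenated homotopy are themselves minimum. -/
theorem stmt_6 {a b : ℂ} (γ₁ γ₂ γ₃ : Path a b)
    (H₁ : Path.Homotopy γ₁ γ₂) (H₂ : Path.Homotopy γ₂ γ₃)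
    (hnull : volume (Set.range γ₂) = 0)
    (hmin : homArea (H₁.trans H₂) = minHomArea γ₁ γ₃)
    (hfin : minHomArea γ₁ γ₃ < ⊤) :
    homArea H₁ = minHomArea γ₁ γ₂ ∧ homArea H₂ = minHomArea γ₂ γ₃ := by
  have hsum : homArea H₁ + homArea H₂ = minHomArea γ₁ γ₃ := by
    rw [← homArea_trans H₁ H₂ hnull, hmin]
  have hlt : homArea H₁ + homArea H₂ < ⊤ := hsum ▸ hfin
  have h1 : homArea H₁ ≠ ⊤ := by
    intro h
    rw [h, top_add] at hlt
    exact lt_irrefl _ hlt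
  have h2 : homArea H₂ ≠ ⊤ := by
    intro h
    rw [h, add_top] at hlt
    exact lt_irrefl _ hlt
  constructor
  · refine le_antisymm (le_iInf fun K₁ => ?_) (iInf_le _ H₁)
    have hK : minHomArea γ₁ γ₃ ≤ homArea (K₁.trans H₂) := iInf_le _ (K₁.trans H₂)
    rw [homArea_trans K₁ H₂ hnull, ← hsum] at hK
    exact (ENNReal.add_le_add_iff_right h2).mp hK
  · refine le_antisymm (le_iInf fun K₂ => ?_) (iInf_le _ H₂)
    have hK : minHomArea γ₁ γ₃ ≤ homArea (H₁.trans K₂) := iInf_le _ (H₁.trans K₂)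
    rw [homArea_trans H₁ K₂ hnull, ← hsum] at hK
    exact (ENNReal.add_le_add_iff_left h1).mp hK
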